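/- Let S be the edge set of a spanning tree of G and let ℒ_S be its set of lonely cuts. Then for every subset ℒ' ⊆ ℒ_S it holds that x*(∪_{C∈ℒ'} C) ≥ |ℒ'|. -/

import Mathlib

set_option maxHeartbeats 1000000


open Finset
open scoped Classical symmDiff

/-- A multigraph on vertex type `V` with edge type `E`, given by the two endpoints
of each edge. -/
structure MultiGraph (V E : Type*) where
  fst : E → V
  snd : E → V

namespace MultiGraph

variable {V E : Type*} [Fintype V] [DecidableEq V] [Fintype E] [DecidableEq E]
variable (G : MultiGraph V E)

/-- The cut `δ(U)`: the set of edges with exactly one endpoint in `U`. -/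
noncomputable def cut (U : Finset V) : Finset E :=
  univ.filter fun e => (G.fst e ∈ U ∧ G.snd e ∉ U) ∨ (G.fst e ∉ U ∧ G.snd e ∈ U)

/-- The degree of `v` with respect to the edge multiset `F`. -/
def deg (F : Multiset E) (v : V) : ℕ :=
  (F.map fun e => (if G.fst e = v then 1 else 0) + (if G.snd e = v then 1 else 0)).sum

/-- `odd(F)`: the set of vertices of odd degree in `(V, F)`. -/
noncomputable def oddVerts (F : Multiset E) : Finset V :=
  univ.filter fun v => Odd (G.deg F v)

/-- Adjacency via an edge satisfying the predicate `P`. -/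
def Adj (P : E → Prop) (a b : V) : Prop :=
  ∃ e, P e ∧ ((G.fst e = a ∧ G.snd e = b) ∨ (G.fst e = b ∧ G.snd e = a))

/-- `(V, {e | P e})` is a connected (spanning) subgraph. -/
def ConnectedOn (P : E → Prop) : Prop :=
  ∀ u w : V, Relation.ReflTransGen (G.Adj P) u w

/-- The graph `G` is connected. -/
def Connected : Prop := G.ConnectedOn fun _ => True

/-- A `T`-tour: a multi-subset `F` of the edges such that `(V, F)` is connected and
`odd(F) = T`. -/
def IsTTour (T : Finset V) (F : Multiset E) : Prop :=
  G.ConnectedOn (· ∈ F) ∧ G.oddVerts F = T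

/-- `S` is the edge set of a spanning tree of `G`. -/
def IsSpanningTree (S : Finset E) : Prop :=
  G.ConnectedOn (· ∈ S) ∧ S.card + 1 = Fintype.card V

/-- `δ(𝒲)`: the set of edges whose endpoints lie in different parts of the
partition `𝒲` of `V`. -/
noncomputable def partitionCut (W : Finpartition (univ : Finset V)) : Finset E :=
  univ.filter fun e => ∀ P ∈ W.parts, ¬(G.fst e ∈ P ∧ G.snd e ∈ P)

/-- Feasibility for the standard LP relaxation of the `T`-tour problem. -/
def LPFeasible (T : Finset V) (x : E → ℝ) : Prop :=
  (∀ e, 0 ≤ x e) ∧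
  (∀ U : Finset V, U.Nonempty → U ≠ univ → Even ((T ∩ U).card) →
    2 ≤ ∑ e ∈ G.cut U, x e) ∧
  (∀ W : Finpartition (univ : Finset V),
    (W.parts.card : ℝ) - 1 ≤ ∑ e ∈ G.partitionCut W, x e)

/-- `C` is a cut of `G`, i.e. `C = δ(U)` for some nonempty proper `U ⊆ V`. -/
def IsCut (C : Finset E) : Prop :=
  ∃ U : Finset V, U.Nonempty ∧ U ≠ univ ∧ C = G.cut U

/-- A narrow cut: a cut `C` with `x(C) < 2`. -/
def Narrow (x : E → ℝ) (C : Finset E) : Prop :=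
  G.IsCut C ∧ ∑ e ∈ C, x e < 2

/-- `𝒩`: the set of narrow cuts. -/
noncomputable def narrowCuts (x : E → ℝ) : Finset (Finset E) :=
  univ.filter fun C => G.Narrow x C

/-- A narrow cut `C` is lonely for `S` if `|S ∩ C| = 1`. -/
def Lonely (x : E → ℝ) (S C : Finset E) : Prop :=
  G.Narrow x C ∧ (S ∩ C).card = 1

/-- `ℒ_S`: the set of lonely cuts of `S`. -/
noncomputable def lonelyCuts (x : E → ℝ) (S : Finset E) : Finset (Finset E) :=
  univ.filter fun C => G.Lonely x S C

/-- `L_S = ∪_{C ∈ ℒ_S} (S ∩ C)`: the set of lonely edges of `S`. -/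
noncomputable def lonelyEdges (x : E → ℝ) (S : Finset E) : Finset E :=
  S.filter fun e => ∃ C, G.Lonely x S C ∧ e ∈ C

/-- The incidence vector `χ^F` of an edge set `F`. -/
def chi (F : Finset E) : E → ℝ := fun e => if e ∈ F then 1 else 0

/-- The vector `v^C = (1/(2 - x(C))) · Σ_{S : C ∈ ℒ_S} p_S · χ^{S ∩ C}`. -/
noncomputable def vC (x : E → ℝ) (p : Finset E → ℝ) (C : Finset E) : E → ℝ :=
  fun e => (1 / (2 - ∑ f ∈ C, x f)) *
    ∑ S : Finset E, (if G.Lonely x S C then p S else 0) * chi (S ∩ C) e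

/-- The modified cost
`c^S(e) = c(e) + 2·(Σ_{C ∈ ℒ_S : e ∈ C} c(S ∩ C) − max_{C ∈ ℒ_S : e ∈ C} c(S ∩ C))`,
where the maximum over the empty set is `0`. -/
noncomputable def modCost (c x : E → ℝ) (S : Finset E) (e : E) : ℝ :=
  c e + 2 * ((∑ C ∈ (G.lonelyCuts x S).filter (fun C => e ∈ C), ∑ f ∈ S ∩ C, c f)
    - (if h : ((G.lonelyCuts x S).filter (fun C => e ∈ C)).Nonempty
        then ((G.lonelyCuts x S).filter (fun C => e ∈ C)).sup' h (fun C => ∑ f ∈ S ∩ C, c f)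
        else 0))

/-- The set of vertices reachable from `v` using edges satisfying `P`. -/
noncomputable def reachSet (P : E → Prop) (v : V) : Finset V :=
  univ.filter fun w => Relation.ReflTransGen (G.Adj P) v w

end MultiGraph

namespace MultiGraph

variable {V E : Type*} [Fintype V] [DecidableEq V] [Fintype E] [DecidableEq E]

private lemma exists_fiber_finpartition' {α β : Type*} [Fintype α] [DecidableEq α] [DecidableEq β]
    (K : α → β) :
    ∃ W : Finpartition (Finset.univ : Finset α),
      W.parts.card = (Finset.univ.image K).card ∧
      ∀ a : α, Finset.univ.filter (fun b => K b = K a) ∈ W.parts := by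
  set F : β → Finset α := fun t => Finset.univ.filter (fun b => K b = t) with hF
  have hinj : Set.InjOn F (Finset.univ.image K) := by
    intro t ht t' ht' hEq
    obtain ⟨b, -, rfl⟩ := Finset.mem_image.mp ht
    have hb : b ∈ F (K b) := Finset.mem_filter.mpr ⟨Finset.mem_univ _, rfl⟩
    rw [hEq] at hb
    exact (Finset.mem_filter.mp hb).2
  refine ⟨⟨(Finset.univ.image K).image F, ?_, ?_, ?_⟩, ?_, ?_⟩
  · rw [Finset.supIndep_iff_pairwiseDisjoint]
    intro P hP Q hQ hne
    obtain ⟨t, ht, rfl⟩ := Finset.mem_image.mp hP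
    obtain ⟨t', ht', rfl⟩ := Finset.mem_image.mp hQ
    have htt : t ≠ t' := fun h => hne (by rw [h])
    show Disjoint (F t) (F t')
    rw [Finset.disjoint_left]
    intro a ha ha'
    exact htt ((Finset.mem_filter.mp ha).2.symm.trans (Finset.mem_filter.mp ha').2)
  · ext a
    simp only [Finset.mem_sup, Finset.mem_univ, iff_true, id]
    exact ⟨F (K a), Finset.mem_image_of_mem _ (Finset.mem_image_of_mem _ (Finset.mem_univ a)),
      Finset.mem_filter.mpr ⟨Finset.mem_univ _, rfl⟩⟩
  · intro h
    rw [Finset.bot_eq_empty] at h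
    obtain ⟨t, ht, hFt⟩ := Finset.mem_image.mp h
    obtain ⟨b, -, rfl⟩ := Finset.mem_image.mp ht
    have hb : b ∈ F (K b) := Finset.mem_filter.mpr ⟨Finset.mem_univ _, rfl⟩
    rw [hFt] at hb
    exact absurd hb (Finset.notMem_empty b)
  · exact Finset.card_image_of_injOn hinj
  · intro a
    exact Finset.mem_image_of_mem F (Finset.mem_image_of_mem K (Finset.mem_univ a))

/-- For every spanning tree `S` and every subset `ℒ' ⊆ ℒ_S` of its
lonely cuts, `x*(∪_{C ∈ ℒ'} C) ≥ |ℒ'|`. -/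
theorem hall_condition_lonely_cuts (G : MultiGraph V E) (hG : G.Connected)
    (T : Finset V) (hT : Even T.card) (x : E → ℝ) (hx : G.LPFeasible T x)
    (S : Finset E) (hS : G.IsSpanningTree S)
    (L' : Finset (Finset E)) (hL' : ∀ C ∈ L', G.Lonely x S C) :
    (L'.card : ℝ) ≤ ∑ e ∈ L'.biUnion id, x e := by
  rcases L'.eq_empty_or_nonempty with rfl | hne
  · simp
  obtain ⟨C₀, hC₀⟩ := hne
  obtain ⟨e₀, he₀⟩ := Finset.card_eq_one.mp (hL' C₀ hC₀).2
  have hbig : ∀ C : Finset E, ∃ (UC : Finset V) (e : E),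
      C ∈ L' → UC.Nonempty ∧ UC ≠ univ ∧ C = G.cut UC ∧ S ∩ C = {e} := by
    intro C
    by_cases hC : C ∈ L'
    · obtain ⟨U, hU1, hU2, hU3⟩ := (hL' C hC).1.1
      obtain ⟨e, he⟩ := Finset.card_eq_one.mp (hL' C hC).2
      exact ⟨U, e, fun _ => ⟨hU1, hU2, hU3, he⟩⟩
    · exact ⟨∅, e₀, fun h => absurd h hC⟩
  choose U eC hprop using hbig
  have hCU : ∀ C ∈ L', C = G.cut (U C) := fun C hC => (hprop C hC).2.2.1
  have hSe : ∀ C ∈ L', S ∩ C = {eC C} := fun C hC => (hprop C hC).2.2.2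
  obtain ⟨v₀, -⟩ := (hprop C₀ hC₀).1
  have hVne : (univ : Finset V).Nonempty := ⟨v₀, mem_univ v₀⟩
  have hcutmem : ∀ (U' : Finset V) (g : E), g ∈ G.cut U' ↔
      ((G.fst g ∈ U' ∧ G.snd g ∉ U') ∨ (G.fst g ∉ U' ∧ G.snd g ∈ U')) := by
    intro U' g; simp [MultiGraph.cut]
  have heS : ∀ C ∈ L', eC C ∈ S ∧ eC C ∈ C := by
    intro C hC
    have : eC C ∈ S ∩ C := by rw [hSe C hC]; exact mem_singleton_self _
    exact ⟨(mem_inter.mp this).1, (mem_inter.mp this).2⟩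
  have hcross : ∀ C ∈ L', ¬(G.fst (eC C) ∈ U C ↔ G.snd (eC C) ∈ U C) := by
    intro C hC
    have h1 : eC C ∈ G.cut (U C) := by rw [← hCU C hC]; exact (heS C hC).2
    rw [hcutmem] at h1; tauto
  have hside : ∀ C ∈ L', ∀ g, g ∈ S → g ≠ eC C → (G.fst g ∈ U C ↔ G.snd g ∈ U C) := by
    intro C hC g hgS hgne
    by_contra hcon
    have h1 : g ∈ G.cut (U C) := by rw [hcutmem]; tauto
    rw [← hCU C hC] at h1
    have : g ∈ S ∩ C := mem_inter.mpr ⟨hgS, h1⟩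
    rw [hSe C hC, mem_singleton] at this
    exact hgne this
  have hreachside : ∀ C ∈ L', ∀ a w : V,
      Relation.ReflTransGen (G.Adj fun g => g ∈ S ∧ g ≠ eC C) a w → (a ∈ U C ↔ w ∈ U C) := by
    intro C hC a w h
    induction h with
    | refl => exact Iff.rfl
    | tail h1 h2 ih =>
      obtain ⟨g, ⟨hgS, hgne⟩, (⟨hf, hs⟩ | ⟨hf, hs⟩)⟩ := h2 <;>
        [skip; skip] <;>
      · have hiff := hside C hC g hgS hgne
        rw [hf, hs] at hiff
        tauto
  have hreach2 : ∀ C ∈ L', ∀ w : V,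
      Relation.ReflTransGen (G.Adj fun g => g ∈ S ∧ g ≠ eC C) (G.fst (eC C)) w ∨
      Relation.ReflTransGen (G.Adj fun g => g ∈ S ∧ g ≠ eC C) (G.snd (eC C)) w := by
    intro C hC w
    have h := hS.1 (G.fst (eC C)) w
    induction h with
    | refl => exact Or.inl Relation.ReflTransGen.refl
    | tail h1 h2 ih =>
      obtain ⟨g, hgS, hor⟩ := h2
      by_cases hg : g = eC C
      · subst hg
        rcases hor with ⟨hf, hs⟩ | ⟨hf, hs⟩
        · subst hs; exact Or.inr Relation.ReflTransGen.refl
        · subst hf; exact Or.inl Relation.ReflTransGen.refl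
      · rcases ih with h | h
        · exact Or.inl (h.tail ⟨g, ⟨hgS, hg⟩, hor⟩)
        · exact Or.inr (h.tail ⟨g, ⟨hgS, hg⟩, hor⟩)
  have hinj : ∀ C₁ ∈ L', ∀ C₂ ∈ L', eC C₁ = eC C₂ → C₁ = C₂ := by
    intro C₁ h1 C₂ h2 he
    have key : ∀ w : V,
        (((w ∈ U C₁) ↔ (G.fst (eC C₁) ∈ U C₁)) ↔ ((w ∈ U C₂) ↔ (G.fst (eC C₁) ∈ U C₂))) := by
      intro w
      rcases hreach2 C₁ h1 w with h | h
      · have a1 := hreachside C₁ h1 _ _ h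
        have a2 := hreachside C₂ h2 (G.fst (eC C₁)) w (by rw [he] at h ⊢; exact h)
        tauto
      · have b1 := hreachside C₁ h1 _ _ h
        have b2 := hreachside C₂ h2 (G.snd (eC C₁)) w (by rw [he] at h ⊢; exact h)
        have c1 := hcross C₁ h1
        have c2 := hcross C₂ h2
        rw [← he] at c2
        tauto
    ext g
    rw [hCU C₁ h1, hCU C₂ h2, hcutmem, hcutmem]
    have k1 := key (G.fst g)
    have k2 := key (G.snd g)
    tauto
  have hnotmem : ∀ C ∈ L', ∀ C' ∈ L', C ≠ C' → eC C ∉ C' := by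
    intro C hC C' hC' hnee hmem
    have h1 : eC C ∈ S ∩ C' := mem_inter.mpr ⟨(heS C hC).1, hmem⟩
    rw [hSe C' hC', mem_singleton] at h1
    exact hnee (hinj C hC C' hC' h1)
  set key : Finset (Finset E) → V → Finset (Finset E) :=
    fun M a => M.filter (fun C => a ∈ U C) with hkeydef
  have hcount : ∀ M : Finset (Finset E), M ⊆ L' → M.card + 1 ≤ (univ.image (key M)).card := by
    intro M
    induction M using Finset.induction_on with
    | empty =>
      intro _
      simpa using Finset.card_pos.mpr (hVne.image (key ∅))
    | @insert C M hCM ih =>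
      intro hsub
      have hCL : C ∈ L' := hsub (mem_insert_self C M)
      have hML : M ⊆ L' := fun a ha => hsub (mem_insert_of_mem ha)
      have hold : key M (G.fst (eC C)) = key M (G.snd (eC C)) := by
        rw [hkeydef]
        apply Finset.filter_congr
        intro C' hC'
        have hnee : C ≠ C' := fun h => hCM (h ▸ hC')
        have hnm := hnotmem C hCL C' (hML hC') hnee
        rw [hCU C' (hML hC'), hcutmem] at hnm
        tauto
      have hnew_ne : key (insert C M) (G.fst (eC C)) ≠ key (insert C M) (G.snd (eC C)) := by
        intro hEq
        apply hcross C hCL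
        constructor
        · intro h
          have hm : C ∈ key (insert C M) (G.fst (eC C)) :=
            mem_filter.mpr ⟨mem_insert_self C M, h⟩
          rw [hEq] at hm
          exact (mem_filter.mp hm).2
        · intro h
          have hm : C ∈ key (insert C M) (G.snd (eC C)) :=
            mem_filter.mpr ⟨mem_insert_self C M, h⟩
          rw [← hEq] at hm
          exact (mem_filter.mp hm).2
      have herase : ∀ w : V, (key (insert C M) w).erase C = key M w := by
        intro w
        ext C'
        simp only [hkeydef, Finset.mem_erase, Finset.mem_filter, Finset.mem_insert]
        constructor
        · rintro ⟨hne', ⟨h1 | h1, h2⟩⟩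
          · exact absurd h1 hne'
          · exact ⟨h1, h2⟩
        · rintro ⟨h1, h2⟩
          exact ⟨fun h => hCM (h ▸ h1), Or.inr h1, h2⟩
      have hkbA : key (insert C M) (G.snd (eC C)) ∈ univ.image (key (insert C M)) :=
        mem_image_of_mem _ (mem_univ _)
      have hBsub : univ.image (key M) ⊆
          (((univ.image (key (insert C M))).erase (key (insert C M) (G.snd (eC C)))).image
            (fun t => t.erase C)) := by
        intro t ht
        obtain ⟨w, -, rfl⟩ := mem_image.mp ht
        by_cases hw : key (insert C M) w = key (insert C M) (G.snd (eC C))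
        · refine mem_image.mpr ⟨key (insert C M) (G.fst (eC C)), ?_, ?_⟩
          · exact mem_erase.mpr ⟨hnew_ne, mem_image_of_mem _ (mem_univ _)⟩
          · rw [herase, hold, ← herase (G.snd (eC C)), ← hw, herase w]
        · exact mem_image.mpr ⟨key (insert C M) w,
            mem_erase.mpr ⟨hw, mem_image_of_mem _ (mem_univ w)⟩, herase w⟩
      have step1 : (univ.image (key M)).card + 1 ≤ (univ.image (key (insert C M))).card := by
        calc (univ.image (key M)).card + 1
            ≤ (((univ.image (key (insert C M))).erase
                (key (insert C M) (G.snd (eC C)))).image (fun t => t.erase C)).card + 1 :=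
              Nat.add_le_add_right (Finset.card_le_card hBsub) 1
          _ ≤ ((univ.image (key (insert C M))).erase
                (key (insert C M) (G.snd (eC C)))).card + 1 :=
              Nat.add_le_add_right Finset.card_image_le 1
          _ = (univ.image (key (insert C M))).card := by
              rw [Finset.card_erase_of_mem hkbA]
              exact Nat.sub_add_cancel (Finset.card_pos.mpr ⟨_, hkbA⟩)
      rw [Finset.card_insert_of_notMem hCM]
      calc M.card + 1 + 1 ≤ (univ.image (key M)).card + 1 := Nat.add_le_add_right (ih hML) 1
        _ ≤ (univ.image (key (insert C M))).card := step1
  obtain ⟨W, hWcard, hWmem⟩ := exists_fiber_finpartition' (key L')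
  have hsub : G.partitionCut W ⊆ L'.biUnion id := by
    intro g hg
    simp only [MultiGraph.partitionCut, Finset.mem_filter, Finset.mem_univ, true_and] at hg
    have hP := hWmem (G.fst g)
    have h1 : G.fst g ∈ univ.filter (fun b => key L' b = key L' (G.fst g)) :=
      mem_filter.mpr ⟨mem_univ _, rfl⟩
    have h2 : G.snd g ∉ univ.filter (fun b => key L' b = key L' (G.fst g)) :=
      fun h => hg _ hP ⟨h1, h⟩
    have hkey : key L' (G.snd g) ≠ key L' (G.fst g) :=
      fun h => h2 (mem_filter.mpr ⟨mem_univ _, h⟩)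
    have hex : ∃ C ∈ L', ¬(G.snd g ∈ U C ↔ G.fst g ∈ U C) := by
      by_contra hcon
      push_neg at hcon
      apply hkey
      rw [hkeydef]
      apply Finset.filter_congr
      intro C hC
      exact hcon C hC
    obtain ⟨C, hC, hxor⟩ := hex
    refine Finset.mem_biUnion.mpr ⟨C, hC, ?_⟩
    show g ∈ C
    rw [hCU C hC, hcutmem]
    tauto
  have hLP := hx.2.2 W
  have hmono : ∑ e ∈ G.partitionCut W, x e ≤ ∑ e ∈ L'.biUnion id, x e :=
    Finset.sum_le_sum_of_subset_of_nonneg hsub (fun e _ _ => hx.1 e)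
  have hc : L'.card + 1 ≤ W.parts.card := by
    rw [hWcard]; exact hcount L' (Finset.Subset.refl _)
  have hc' : (L'.card : ℝ) + 1 ≤ (W.parts.card : ℝ) := by exact_mod_cast hc
  linarith

end MultiGraph
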